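/- Let G be a Laman graph, let G → G' be a Henneberg 2 move, and let (G,p) and (G',p') be generic frameworks in ℝ². If (G,p) is isostatic (minimally infinitesimally rigid) in ℝ², then (G',p') is isostatic in ℝ². -/

import Mathlib

open SimpleGraph

noncomputable section

/-- The freedom number `f(H) = 2|V(H)| - |E(H)|` of a subgraph. -/
def subFreedom {V : Type} {G : SimpleGraph V} (H : G.Subgraph) : ℤ :=
  2 * (H.verts.ncard : ℤ) - (H.edgeSet.ncard : ℤ)

/-- The freedom number `f(G) = 2|V| - |E|` of a graph. -/
def gFreedom {V : Type} (G : SimpleGraph V) : ℤ :=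
  2 * ((Set.univ : Set V).ncard : ℤ) - (G.edgeSet.ncard : ℤ)

/-- `G` is independent of type 2: every subgraph (with nonempty vertex set)
has freedom number at least 2. -/
def Indep2 {V : Type} (G : SimpleGraph V) : Prop :=
  ∀ H : G.Subgraph, H.verts.Nonempty → 2 ≤ subFreedom H

/-- `G` is maximally independent of type 2. -/
def MaxIndep2 {V : Type} (G : SimpleGraph V) : Prop := Indep2 G ∧ gFreedom G = 2

/-- `G` is independent of type 3: every subgraph with at least one edge
has freedom number at least 3. -/
def Indep3 {V : Type} (G : SimpleGraph V) : Prop :=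
  ∀ H : G.Subgraph, H.edgeSet.Nonempty → 3 ≤ subFreedom H

/-- `G` is maximally independent of type 3. -/
def MaxIndep3 {V : Type} (G : SimpleGraph V) : Prop := Indep3 G ∧ gFreedom G = 3

/-- A Laman graph: connected and maximally independent of type 3. -/
def Laman {V : Type} (G : SimpleGraph V) : Prop := G.Connected ∧ MaxIndep3 G

/-- Henneberg 1 move: `G'` (on vertex type `β`) is obtained from `G` (on `α`)
via the vertex embedding `φ` by adjoining the new vertex `w` joined to the images
of two distinct vertices `a`, `b` of `G`. -/
def Henneberg1Rel {α β : Type} (G : SimpleGraph α) (G' : SimpleGraph β)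
    (φ : α ↪ β) (w : β) : Prop :=
  (∀ y : β, y ∈ Set.range φ ∨ y = w) ∧ w ∉ Set.range φ ∧
  ∃ a b : α, a ≠ b ∧
    ∀ x y : β, G'.Adj x y ↔
      ((∃ c d : α, G.Adj c d ∧ x = φ c ∧ y = φ d) ∨
       (x = w ∧ (y = φ a ∨ y = φ b)) ∨ (y = w ∧ (x = φ a ∨ x = φ b)))

/-- Henneberg 2 move: `G'` is obtained from `G` by breaking the edge `(u,v)` of `G`
at the new vertex `w` and adding an edge from `w` to a third vertex `z`. -/
def Henneberg2Rel {α β : Type} (G : SimpleGraph α) (G' : SimpleGraph β)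
    (φ : α ↪ β) (w : β) : Prop :=
  (∀ y : β, y ∈ Set.range φ ∨ y = w) ∧ w ∉ Set.range φ ∧
  ∃ u v z : α, G.Adj u v ∧ z ≠ u ∧ z ≠ v ∧
    ∀ x y : β, G'.Adj x y ↔
      ((∃ a b : α, G.Adj a b ∧ ¬ (s(a, b) = s(u, v)) ∧ x = φ a ∧ y = φ b) ∨
       (x = w ∧ (y = φ u ∨ y = φ v ∨ y = φ z)) ∨
       (y = w ∧ (x = φ u ∨ x = φ v ∨ x = φ z)))

def finCastSuccEmb (n : ℕ) : Fin n ↪ Fin (n + 1) :=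
  ⟨Fin.castSucc, Fin.castSucc_injective n⟩

/-- `Derived G0 n G` : the graph `G` on `Fin n` is obtained from the base graph `G0`
by a finite sequence of Henneberg 1 and Henneberg 2 moves. -/
inductive Derived {m : ℕ} (G0 : SimpleGraph (Fin m)) : (n : ℕ) → SimpleGraph (Fin n) → Prop
  | base : Derived G0 m G0
  | h1 {n : ℕ} {G : SimpleGraph (Fin n)} {G' : SimpleGraph (Fin (n + 1))} :
      Derived G0 n G → Henneberg1Rel G G' (finCastSuccEmb n) (Fin.last n) →
      Derived G0 (n + 1) G'
  | h2 {n : ℕ} {G : SimpleGraph (Fin n)} {G' : SimpleGraph (Fin (n + 1))} :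
      Derived G0 n G → Henneberg2Rel G G' (finCastSuccEmb n) (Fin.last n) →
      Derived G0 (n + 1) G'

open scoped RealInnerProductSpace

abbrev E2 := EuclideanSpace ℝ (Fin 2)

/-- A framework `p` in the plane is generic if the `2|V|` coordinates of its
framework points are algebraically independent over `ℚ`. -/
def Generic2 {V : Type} (p : V → E2) : Prop :=
  AlgebraicIndependent ℚ (fun vi : V × Fin 2 => p vi.1 vi.2)

/-- `u` is an infinitesimal flex of the plane framework `(G,p)`. -/
def InfFlex2 {V : Type} (G : SimpleGraph V) (p u : V → E2) : Prop :=
  ∀ a b : V, G.Adj a b → ⟪u a - u b, p a - p b⟫ = 0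

/-- `u` is a rigid-motion flex of the framework vector `p`. -/
def RigidFlex2 {V : Type} (p u : V → E2) : Prop :=
  ∀ a b : V, ⟪u a - u b, p a - p b⟫ = 0

/-- Infinitesimal rigidity in the plane: every infinitesimal flex is a
rigid-motion flex. -/
def InfRigid2 {V : Type} (G : SimpleGraph V) (p : V → E2) : Prop :=
  ∀ u : V → E2, InfFlex2 G p u → RigidFlex2 p u

/-- Isostatic (minimally infinitesimally rigid) in the plane. -/
def Isostatic2 {V : Type} (G : SimpleGraph V) (p : V → E2) : Prop :=
  InfRigid2 G p ∧ ∀ e ∈ G.edgeSet, ¬ InfRigid2 (G.deleteEdges {e}) p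

namespace H2Aux
open Matrix Module MvPolynomial

/-- helper: two orthogonality relations against a nondegenerate pair kill a vector -/
lemma two_orth {v0 v1 w0 w1 z0 z1 : ℝ} (hc : v0 * w1 - v1 * w0 ≠ 0)
    (h1 : z0 * v0 + z1 * v1 = 0) (h2 : z0 * w0 + z1 * w1 = 0) : z0 = 0 ∧ z1 = 0 := by
  constructor
  · have h : z0 * (v0 * w1 - v1 * w0) = 0 := by linear_combination w1 * h1 - v1 * h2
    rcases mul_eq_zero.1 h with h | h
    · exact h
    · exact absurd h hc
  · have h : z1 * (v0 * w1 - v1 * w0) = 0 := by linear_combination v0 * h2 - w0 * h1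
    rcases mul_eq_zero.1 h with h | h
    · exact h
    · exact absurd h hc

variable {V : Type} [Fintype V] [DecidableEq V] {ι : Type} [Fintype ι] [DecidableEq ι]

/-- Admissible indexing of the edges of `G` by `ι` with chosen endpoints. -/
def IsEnds (G : SimpleGraph V) (ends : ι → V × V) : Prop :=
  (∀ e, G.Adj (ends e).1 (ends e).2) ∧
  (Function.Injective fun e => s((ends e).1, (ends e).2)) ∧
  (∀ a b : V, G.Adj a b → ∃ e, ends e = (a, b) ∨ ends e = (b, a))

/-- The rigidity matrix. -/
def RM (ends : ι → V × V) (p : V → E2) : Matrix (V × Fin 2) ι ℝ :=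
  fun xi e =>
    if xi.1 = (ends e).1 then p (ends e).1 xi.2 - p (ends e).2 xi.2
    else if xi.1 = (ends e).2 then p (ends e).2 xi.2 - p (ends e).1 xi.2 else 0

/-- The submodule of (uncurried) rigid-motion flexes. -/
def rigidSet (p : V → E2) : Submodule ℝ ((V × Fin 2) → ℝ) where
  carrier := {u | ∀ a b : V, ∑ i : Fin 2, (u (a, i) - u (b, i)) * (p a i - p b i) = 0}
  add_mem' := by
    intro x y hx hy a b
    have h1 := hx a b; have h2 := hy a b
    have : ∑ i : Fin 2, ((x + y) (a, i) - (x + y) (b, i)) * (p a i - p b i)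
        = (∑ i : Fin 2, (x (a, i) - x (b, i)) * (p a i - p b i))
          + ∑ i : Fin 2, (y (a, i) - y (b, i)) * (p a i - p b i) := by
      rw [← Finset.sum_add_distrib]
      exact Finset.sum_congr rfl fun i _ => by simp [Pi.add_apply]; ring
    rw [this, h1, h2, add_zero]
  zero_mem' := by intro a b; simp
  smul_mem' := by
    intro c x hx a b
    have h1 := hx a b
    have : ∑ i : Fin 2, ((c • x) (a, i) - (c • x) (b, i)) * (p a i - p b i)
        = c * ∑ i : Fin 2, (x (a, i) - x (b, i)) * (p a i - p b i) := by
      rw [Finset.mul_sum]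
      exact Finset.sum_congr rfl fun i _ => by simp [Pi.smul_apply]; ring
    rw [this, h1, mul_zero]

/-- The submodule of (uncurried) infinitesimal flexes. -/
def flexSet (ends : ι → V × V) (p : V → E2) : Submodule ℝ ((V × Fin 2) → ℝ) :=
  LinearMap.ker (RM ends p)ᵀ.mulVecLin

lemma RM_entry_split (ends : ι → V × V) (p : V → E2) (e : ι)
    (hne : (ends e).1 ≠ (ends e).2) (x : V) (i : Fin 2) :
    RM ends p (x, i) e =
      (if x = (ends e).1 then p (ends e).1 i - p (ends e).2 i else 0)
      + (if x = (ends e).2 then p (ends e).2 i - p (ends e).1 i else 0) := by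
  by_cases h1 : x = (ends e).1
  · have h2 : ¬ x = (ends e).2 := by rw [h1]; exact hne
    simp [RM, h1, h2, hne, hne.symm]
  · by_cases h2 : x = (ends e).2
    · simp [RM, h1, h2, hne, hne.symm]
    · simp [RM, h1, h2]

lemma flex_apply (ends : ι → V × V) (p : V → E2) (e : ι)
    (hne : (ends e).1 ≠ (ends e).2) (u : (V × Fin 2) → ℝ) :
    ((RM ends p)ᵀ.mulVecLin u) e
      = ∑ i : Fin 2, (u ((ends e).1, i) - u ((ends e).2, i)) * (p (ends e).1 i - p (ends e).2 i) := by
  rw [Matrix.mulVecLin_apply]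
  show ∑ xi : V × Fin 2, (RM ends p)ᵀ e xi * u xi = _
  rw [Fintype.sum_prod_type, Finset.sum_comm]
  refine Finset.sum_congr rfl fun i _ => ?_
  have : ∀ x : V, (RM ends p)ᵀ e (x, i) * u (x, i)
      = (if x = (ends e).1 then (p (ends e).1 i - p (ends e).2 i) * u (x, i) else 0)
        + (if x = (ends e).2 then (p (ends e).2 i - p (ends e).1 i) * u (x, i) else 0) := by
    intro x
    rw [Matrix.transpose_apply, RM_entry_split ends p e hne x i]
    by_cases h1 : x = (ends e).1 <;> by_cases h2 : x = (ends e).2 <;> simp [h1, h2, hne, hne.symm] <;> ring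
  rw [Finset.sum_congr rfl fun x _ => this x, Finset.sum_add_distrib,
    Finset.sum_ite_eq' Finset.univ ((ends e).1), Finset.sum_ite_eq' Finset.univ ((ends e).2)]
  simp
  ring

lemma stress_apply (ends : ι → V × V) (p : V → E2) (ω : ι → ℝ) (x : V) (i : Fin 2) :
    ((RM ends p).mulVecLin ω) (x, i) = ∑ e : ι, RM ends p (x, i) e * ω e := by
  rw [Matrix.mulVecLin_apply]
  rfl

lemma rigid_le_flex {G : SimpleGraph V} {ends : ι → V × V} (hE : IsEnds G ends) (p : V → E2) :
    rigidSet p ≤ flexSet ends p := by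
  intro u hu
  have hu' : ∀ a b : V, ∑ i : Fin 2, (u (a, i) - u (b, i)) * (p a i - p b i) = 0 := hu
  show (RM ends p)ᵀ.mulVecLin u = 0
  funext e
  rw [flex_apply ends p e (hE.1 e).ne u]
  exact hu' _ _
set_option linter.unusedSectionVars false

/-- A generically-placed configuration: distinct points, and no three collinear. -/
def GenPos (p : V → E2) : Prop :=
  (∀ a b : V, a ≠ b → p a ≠ p b) ∧
  (∀ a b x : V, a ≠ b → x ≠ a → x ≠ b →
    (p b 0 - p a 0) * (p x 1 - p a 1) - (p b 1 - p a 1) * (p x 0 - p a 0) ≠ 0)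

lemma three_le_finrank_rigid (p : V → E2) (a b : V) (hpab : p a ≠ p b) :
    3 ≤ Module.finrank ℝ (rigidSet p) := by
  classical
  -- three explicit rigid motions
  set T : Fin 3 → ((V × Fin 2) → ℝ) := fun k xi =>
    if k = 0 then (if xi.2 = 0 then 1 else 0)
    else if k = 1 then (if xi.2 = 1 then 1 else 0)
    else (if xi.2 = 0 then -(p xi.1 1) else p xi.1 0) with hT
  have hmem : ∀ k, T k ∈ rigidSet p := by
    intro k c d
    fin_cases k <;> simp [hT, Fin.sum_univ_two] <;> ring
  have hind : LinearIndependent ℝ T := by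
    rw [Fintype.linearIndependent_iff]
    intro g hg
    have hco : ∀ xi : V × Fin 2, g 0 * T 0 xi + g 1 * T 1 xi + g 2 * T 2 xi = 0 := by
      intro xi
      have := congrFun hg xi
      simpa [Fin.sum_univ_three] using this
    have hcase : p a 0 ≠ p b 0 ∨ p a 1 ≠ p b 1 := by
      by_contra hco2
      push_neg at hco2
      apply hpab
      ext i
      fin_cases i
      exacts [hco2.1, hco2.2]
    have ha0 := hco (a, 0); have ha1 := hco (a, 1)
    have hb0 := hco (b, 0); have hb1 := hco (b, 1)
    simp [hT] at ha0 ha1 hb0 hb1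
    have hg2 : g 2 = 0 := by
      rcases hcase with hi | hi
      · have h : g 2 * (p a 0 - p b 0) = 0 := by linear_combination ha1 - hb1
        rcases mul_eq_zero.1 h with h | h
        · exact h
        · exact absurd (by linarith) hi
      · have h : g 2 * (p a 1 - p b 1) = 0 := by linear_combination hb0 - ha0
        rcases mul_eq_zero.1 h with h | h
        · exact h
        · exact absurd (by linarith) hi
    have hg0 : g 0 = 0 := by rw [hg2] at ha0; linarith
    have hg1 : g 1 = 0 := by rw [hg2] at ha1; linarith
    intro k; fin_cases k <;> assumption
  have hspan : Submodule.span ℝ (Set.range T) ≤ rigidSet p := by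
    rw [Submodule.span_le]
    rintro _ ⟨k, rfl⟩
    exact hmem k
  calc (3 : ℕ) = Module.finrank ℝ (Submodule.span ℝ (Set.range T)) := by
        rw [finrank_span_eq_card hind]; simp
    _ ≤ Module.finrank ℝ (rigidSet p) := Submodule.finrank_mono hspan

lemma finrank_rigid_le (p : V → E2) (a b : V) (hab : a ≠ b) (hgen : GenPos p) :
    Module.finrank ℝ (rigidSet p) ≤ 3 := by
  classical
  have hpab : p a ≠ p b := hgen.1 a b hab
  -- the evaluation map into ℝ³
  set L : rigidSet p →ₗ[ℝ] (Fin 3 → ℝ) :=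
    { toFun := fun u k =>
        if k = 0 then u.1 (a, 0) else if k = 1 then u.1 (a, 1)
        else (-(p b 1 - p a 1)) * u.1 (b, 0) + (p b 0 - p a 0) * u.1 (b, 1)
      map_add' := by intro x y; funext k; by_cases h0 : k = 0 <;> by_cases h1 : k = 1 <;>
        simp [h0, h1] <;> ring
      map_smul' := by intro c x; funext k; by_cases h0 : k = 0 <;> by_cases h1 : k = 1 <;>
        simp [h0, h1] <;> ring } with hL
  have hinj : Function.Injective L := by
    rw [← LinearMap.ker_eq_bot, eq_bot_iff]
    rintro ⟨u, hu⟩ hker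
    have hu' : ∀ c d : V, ∑ i : Fin 2, (u (c, i) - u (d, i)) * (p c i - p d i) = 0 := hu
    have hk : ∀ k : Fin 3, L ⟨u, hu⟩ k = 0 := fun k => congrFun hker k
    have ha0 : u (a, 0) = 0 := by have := hk 0; simpa [hL] using this
    have ha1 : u (a, 1) = 0 := by have := hk 1; simpa [hL] using this
    have hb2 : (-(p b 1 - p a 1)) * u (b, 0) + (p b 0 - p a 0) * u (b, 1) = 0 := by
      have := hk 2; simpa [hL] using this
    -- u b = 0
    have hvne : p b 0 - p a 0 ≠ 0 ∨ p b 1 - p a 1 ≠ 0 := by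
      by_contra h
      push_neg at h
      have e0 : p a 0 = p b 0 := by linarith [h.1]
      have e1 : p a 1 = p b 1 := by linarith [h.2]
      apply hpab
      ext i
      fin_cases i
      exacts [e0, e1]
    have habq := hu' a b
    rw [Fin.sum_univ_two, ha0, ha1] at habq
    -- (0 - u(b,i)) * (p a i - p b i) summed = 0 :  u(b) ⬝ (p b - p a) = 0
    have hb1' : u (b, 0) * (p b 0 - p a 0) + u (b, 1) * (p b 1 - p a 1) = 0 := by
      linear_combination habq
    have hb2' : u (b, 0) * (-(p b 1 - p a 1)) + u (b, 1) * (p b 0 - p a 0) = 0 := by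
      linear_combination hb2
    have hcross : (p b 0 - p a 0) * (p b 0 - p a 0) - (p b 1 - p a 1) * (-(p b 1 - p a 1)) ≠ 0 := by
      intro heq
      rcases hvne with h | h
      · nlinarith [mul_self_pos.mpr h, mul_self_nonneg (p b 1 - p a 1)]
      · nlinarith [mul_self_pos.mpr h, mul_self_nonneg (p b 0 - p a 0)]
    obtain ⟨hub0, hub1⟩ := two_orth hcross hb1' hb2'
    -- now arbitrary x
    have hx : ∀ x : V, u (x, 0) = 0 ∧ u (x, 1) = 0 := by
      intro x
      by_cases hxa : x = a
      · subst hxa; exact ⟨ha0, ha1⟩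
      by_cases hxb : x = b
      · subst hxb; exact ⟨hub0, hub1⟩
      have h1 := hu' x a
      have h2 := hu' x b
      rw [Fin.sum_univ_two] at h1 h2
      rw [ha0, ha1] at h1
      rw [hub0, hub1] at h2
      have h1' : u (x, 0) * (p x 0 - p a 0) + u (x, 1) * (p x 1 - p a 1) = 0 := by
        linear_combination h1
      have h2' : u (x, 0) * (p x 0 - p b 0) + u (x, 1) * (p x 1 - p b 1) = 0 := by
        linear_combination h2
      have hcr : (p x 0 - p a 0) * (p x 1 - p b 1) - (p x 1 - p a 1) * (p x 0 - p b 0) ≠ 0 := by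
        have := hgen.2 a b x hab hxa hxb
        intro h
        apply this
        linear_combination h
      exact two_orth hcr h1' h2'
    have : u = 0 := by
      funext xi
      rcases xi with ⟨x, i⟩
      fin_cases i
      · exact (hx x).1
      · exact (hx x).2
    exact (Submodule.mem_bot ℝ).mpr (Subtype.ext this)
  calc Module.finrank ℝ (rigidSet p) ≤ Module.finrank ℝ (Fin 3 → ℝ) :=
        LinearMap.finrank_le_finrank_of_injective hinj
    _ = 3 := by simp

lemma inner_coord (x y : E2) : (⟪x, y⟫ : ℝ) = ∑ i : Fin 2, x i * y i := by
  simp [PiLp.inner_apply, RCLike.inner_apply]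
  ring

/-- translation between curried inner-product statements and coordinate sums -/
lemma inner_sub_coord (p u : V → E2) (a b : V) :
    (⟪u a - u b, p a - p b⟫ : ℝ)
      = ∑ i : Fin 2, ((fun xi : V × Fin 2 => u xi.1 xi.2) (a, i)
          - (fun xi : V × Fin 2 => u xi.1 xi.2) (b, i)) * (p a i - p b i) := by
  rw [inner_coord]
  exact Finset.sum_congr rfl fun i _ => by simp

lemma rigidFlex_iff (p u : V → E2) :
    RigidFlex2 p u ↔ (fun xi : V × Fin 2 => u xi.1 xi.2) ∈ rigidSet p := by
  constructor
  · intro h a b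
    have := h a b
    rw [inner_sub_coord] at this
    exact this
  · intro h a b
    rw [inner_sub_coord]
    exact h a b

lemma infFlex_iff {G : SimpleGraph V} {ends : ι → V × V} (hE : IsEnds G ends) (p u : V → E2) :
    InfFlex2 G p u ↔ (fun xi : V × Fin 2 => u xi.1 xi.2) ∈ flexSet ends p := by
  constructor
  · intro h
    show (RM ends p)ᵀ.mulVecLin _ = 0
    funext e
    rw [flex_apply ends p e (hE.1 e).ne, Pi.zero_apply, ← inner_sub_coord]
    exact h _ _ (hE.1 e)
  · intro h a b hab
    obtain ⟨e, he⟩ := hE.2.2 a b hab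
    have h0 : (RM ends p)ᵀ.mulVecLin (fun xi : V × Fin 2 => u xi.1 xi.2) e = 0 := by
      rw [h]; rfl
    rw [flex_apply ends p e (hE.1 e).ne] at h0
    rcases he with he | he <;> rw [he] at h0
    · rw [inner_sub_coord]; exact h0
    · rw [inner_sub_coord]
      have : ∀ i : Fin 2, (u a i - u b i) * (p a i - p b i)
          = ((fun xi : V × Fin 2 => u xi.1 xi.2) (a, i)
              - (fun xi : V × Fin 2 => u xi.1 xi.2) (b, i)) * (p a i - p b i) := fun i => rfl
      calc ∑ i : Fin 2, ((fun xi : V × Fin 2 => u xi.1 xi.2) (a, i)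
              - (fun xi : V × Fin 2 => u xi.1 xi.2) (b, i)) * (p a i - p b i)
          = ∑ i : Fin 2, (u b i - u a i) * (p b i - p a i) :=
            Finset.sum_congr rfl fun i _ => by ring
        _ = 0 := h0

/-- every uncurried vector comes from a curried one -/
lemma curry_surj (uh : (V × Fin 2) → ℝ) :
    ∃ u : V → E2, (fun xi : V × Fin 2 => u xi.1 xi.2) = uh := by
  refine ⟨fun x => (WithLp.toLp 2 (fun i => uh (x, i)) : EuclideanSpace ℝ (Fin 2)), ?_⟩
  funext xi
  rfl

lemma flex_le_rigid_of_infRigid {G : SimpleGraph V} {ends : ι → V × V}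
    (hE : IsEnds G ends) {p : V → E2} (hrig : InfRigid2 G p) :
    flexSet ends p ≤ rigidSet p := by
  intro uh huh
  obtain ⟨u, rfl⟩ := curry_surj uh
  rw [← infFlex_iff hE] at huh
  rw [← rigidFlex_iff]
  exact hrig u huh

lemma finrank_flexSet (ends : ι → V × V) (p : V → E2) :
    Module.finrank ℝ (flexSet ends p) = 2 * Fintype.card V - ((RM ends p)ᵀ).rank := by
  have h := LinearMap.finrank_range_add_finrank_ker ((RM ends p)ᵀ).mulVecLin
  have hdom : Module.finrank ℝ ((V × Fin 2) → ℝ) = 2 * Fintype.card V := by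
    rw [Module.finrank_pi]
    simp [Fintype.card_prod, mul_comm]
  rw [hdom] at h
  have h2 : ((RM ends p)ᵀ).rank = Module.finrank ℝ (LinearMap.range ((RM ends p)ᵀ).mulVecLin) := rfl
  have h3 : Module.finrank ℝ (flexSet ends p)
      = Module.finrank ℝ (LinearMap.ker ((RM ends p)ᵀ).mulVecLin) := rfl
  rw [h2, h3]
  omega

/-- KEY: no self-stress implies infinitesimally rigid (given Laman count). -/
lemma infRigid_of_ker_bot {G : SimpleGraph V} {ends : ι → V × V} (hE : IsEnds G ends)
    {p : V → E2} (hgen : GenPos p) {a₀ b₀ : V} (hab : a₀ ≠ b₀)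
    (hcard : Fintype.card ι + 3 = 2 * Fintype.card V)
    (hker : LinearMap.ker (RM ends p).mulVecLin = ⊥) : InfRigid2 G p := by
  have hrk : (RM ends p).rank = Fintype.card ι := by
    have h := LinearMap.finrank_range_add_finrank_ker (RM ends p).mulVecLin
    rw [hker] at h
    simp only [finrank_bot, add_zero, Module.finrank_pi] at h
    exact h
  have hflex : Module.finrank ℝ (flexSet ends p) = 3 := by
    rw [finrank_flexSet, Matrix.rank_transpose, hrk]
    omega
  have heq : rigidSet p = flexSet ends p := by
    apply Submodule.eq_of_le_of_finrank_le (rigid_le_flex hE p)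
    rw [hflex]
    exact three_le_finrank_rigid p a₀ b₀ (hgen.1 a₀ b₀ hab)
  intro u hu
  rw [infFlex_iff hE] at hu
  rw [rigidFlex_iff, heq]
  exact hu

/-- KEY: infinitesimally rigid implies no self-stress (given Laman count). -/
lemma ker_bot_of_infRigid {G : SimpleGraph V} {ends : ι → V × V} (hE : IsEnds G ends)
    {p : V → E2} (hgen : GenPos p) {a₀ b₀ : V} (hab : a₀ ≠ b₀)
    (hcard : Fintype.card ι + 3 = 2 * Fintype.card V)
    (hrig : InfRigid2 G p) : LinearMap.ker (RM ends p).mulVecLin = ⊥ := by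
  have h3 : Module.finrank ℝ (flexSet ends p) ≤ 3 :=
    le_trans (Submodule.finrank_mono (flex_le_rigid_of_infRigid hE hrig))
      (finrank_rigid_le p a₀ b₀ hab hgen)
  have hle : (RM ends p).rank ≤ Fintype.card ι := Matrix.rank_le_card_width _
  have hge : Fintype.card ι ≤ (RM ends p).rank := by
    have := finrank_flexSet ends p
    rw [Matrix.rank_transpose] at this
    omega
  have hrk : (RM ends p).rank = Fintype.card ι := le_antisymm hle hge
  have h := LinearMap.finrank_range_add_finrank_ker (RM ends p).mulVecLin
  have hdom : Module.finrank ℝ (ι → ℝ) = Fintype.card ι := Module.finrank_pi ℝ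
  rw [hdom] at h
  have hrr : Module.finrank ℝ (LinearMap.range (RM ends p).mulVecLin) = Fintype.card ι := hrk
  rw [hrr] at h
  have : Module.finrank ℝ (LinearMap.ker (RM ends p).mulVecLin) = 0 := by omega
  exact Submodule.finrank_eq_zero.mp this

/-- KEY: too few edges implies not infinitesimally rigid. -/
lemma not_infRigid_of_card_lt {G : SimpleGraph V} {ends : ι → V × V} (hE : IsEnds G ends)
    {p : V → E2} (hgen : GenPos p) {a₀ b₀ : V} (hab : a₀ ≠ b₀)
    (hcard : Fintype.card ι + 4 ≤ 2 * Fintype.card V) : ¬ InfRigid2 G p := by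
  intro hrig
  have h3 : Module.finrank ℝ (flexSet ends p) ≤ 3 :=
    le_trans (Submodule.finrank_mono (flex_le_rigid_of_infRigid hE hrig))
      (finrank_rigid_le p a₀ b₀ hab hgen)
  have hle : (RM ends p)ᵀ.rank ≤ Fintype.card ι := by
    rw [Matrix.rank_transpose]
    exact Matrix.rank_le_card_width _
  have := finrank_flexSet ends p
  omega

open MvPolynomial in
/-- The rigidity matrix with polynomial entries. -/
def RMpoly (ends : ι → V × V) : Matrix (V × Fin 2) ι (MvPolynomial (V × Fin 2) ℚ) :=
  fun xi e =>
    if xi.1 = (ends e).1 then X ((ends e).1, xi.2) - X ((ends e).2, xi.2)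
    else if xi.1 = (ends e).2 then X ((ends e).2, xi.2) - X ((ends e).1, xi.2) else 0

open MvPolynomial in
lemma RM_eq_map (ends : ι → V × V) (p : V → E2) :
    RM ends p = (RMpoly ends).map (aeval (fun vi : V × Fin 2 => p vi.1 vi.2)) := by
  funext xi e
  rcases xi with ⟨x, i⟩
  simp only [RM, RMpoly, Matrix.map_apply]
  split_ifs <;> simp

/-- kernel triviality is equivalent to the non-vanishing of the Gram determinant -/
lemma ker_bot_iff_det_ne (M : Matrix (V × Fin 2) ι ℝ) :
    LinearMap.ker M.mulVecLin = ⊥ ↔ (Mᵀ * M).det ≠ 0 := by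
  constructor
  · intro hker hdet
    obtain ⟨v, hv, hMv⟩ := (Matrix.exists_mulVec_eq_zero_iff).mpr hdet
    have hMv' : M *ᵥ v = 0 := by
      have h0 : v ⬝ᵥ ((Mᵀ * M) *ᵥ v) = 0 := by rw [hMv]; simp
      have h1 : v ⬝ᵥ ((Mᵀ * M) *ᵥ v) = (M *ᵥ v) ⬝ᵥ (M *ᵥ v) := by
        rw [← Matrix.mulVec_mulVec, Matrix.dotProduct_mulVec, Matrix.vecMul_transpose]
      rw [h1] at h0
      have h2 : ∀ j, (M *ᵥ v) j = 0 := by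
        have hnn : ∀ j ∈ Finset.univ, (0:ℝ) ≤ (M *ᵥ v) j * (M *ᵥ v) j :=
          fun j _ => mul_self_nonneg _
        have := (Finset.sum_eq_zero_iff_of_nonneg hnn).mp h0
        intro j
        exact mul_self_eq_zero.mp (this j (Finset.mem_univ j))
      funext j
      exact h2 j
    have : v ∈ LinearMap.ker M.mulVecLin := by
      rw [LinearMap.mem_ker, Matrix.mulVecLin_apply]
      exact hMv'
    rw [hker, Submodule.mem_bot] at this
    exact hv this
  · intro hdet
    rw [eq_bot_iff]
    intro v hv
    rw [LinearMap.mem_ker, Matrix.mulVecLin_apply] at hv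
    rw [Submodule.mem_bot]
    by_contra hvne
    apply hdet
    rw [← Matrix.exists_mulVec_eq_zero_iff]
    refine ⟨v, hvne, ?_⟩
    rw [← Matrix.mulVec_mulVec, hv]
    simp

open MvPolynomial in
/-- transfer of stress-freeness from any configuration to a generic one -/
lemma ker_bot_transfer (ends : ι → V × V) (q p' : V → E2)
    (hgen : Generic2 p')
    (hq : LinearMap.ker (RM ends q).mulVecLin = ⊥) :
    LinearMap.ker (RM ends p').mulVecLin = ⊥ := by
  set P : MvPolynomial (V × Fin 2) ℚ := ((RMpoly ends)ᵀ * RMpoly ends).det with hP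
  have key : ∀ r : V → E2,
      ((RM ends r)ᵀ * RM ends r).det
        = aeval (fun vi : V × Fin 2 => r vi.1 vi.2) P := by
    intro r
    set f : MvPolynomial (V × Fin 2) ℚ →+* ℝ :=
      (aeval (fun vi : V × Fin 2 => r vi.1 vi.2) : MvPolynomial (V × Fin 2) ℚ →ₐ[ℚ] ℝ).toRingHom
      with hf
    have hmap : RM ends r = (RMpoly ends).map f := RM_eq_map ends r
    show ((RM ends r)ᵀ * RM ends r).det = f (((RMpoly ends)ᵀ * RMpoly ends).det)
    rw [RingHom.map_det f]
    congr 1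
    rw [RingHom.mapMatrix_apply, Matrix.map_mul, hmap, Matrix.transpose_map]
  have hdq : ((RM ends q)ᵀ * RM ends q).det ≠ 0 := (ker_bot_iff_det_ne _).mp hq
  have hPne : P ≠ 0 := by
    intro h0
    rw [key q, h0, map_zero] at hdq
    exact hdq rfl
  have hinj : Function.Injective (aeval (fun vi : V × Fin 2 => p' vi.1 vi.2) :
      MvPolynomial (V × Fin 2) ℚ →ₐ[ℚ] ℝ) :=
    algebraicIndependent_iff_injective_aeval.mp hgen
  have hdp : ((RM ends p')ᵀ * RM ends p').det ≠ 0 := by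
    rw [key p']
    intro h
    apply hPne
    apply hinj
    rw [h, map_zero]
  exact (ker_bot_iff_det_ne _).mpr hdp

open MvPolynomial in
/-- a generic configuration satisfies a polynomial nonvanishing whenever it is
rationally satisfiable -/
lemma generic_ne (p : V → E2) (hp : Generic2 p) (f : MvPolynomial (V × Fin 2) ℚ)
    (x : (V × Fin 2) → ℚ) (hx : eval x f ≠ 0) :
    aeval (fun vi : V × Fin 2 => p vi.1 vi.2) f ≠ 0 := by
  have hfne : f ≠ 0 := by
    intro h
    rw [h, map_zero] at hx
    exact hx rfl
  have hinj : Function.Injective (aeval (fun vi : V × Fin 2 => p vi.1 vi.2) :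
      MvPolynomial (V × Fin 2) ℚ →ₐ[ℚ] ℝ) :=
    algebraicIndependent_iff_injective_aeval.mp hp
  intro h
  apply hfne
  apply hinj
  rw [h, map_zero]

open MvPolynomial in
lemma generic_genPos (p : V → E2) (hp : Generic2 p) : GenPos p := by
  constructor
  · intro a b hab hpe
    have h := generic_ne p hp (X (a, 0) - X (b, 0))
      (fun vi => if vi = (a, (0 : Fin 2)) then 1 else 0) ?_
    · apply h
      rw [map_sub, aeval_X, aeval_X]
      have : p a 0 = p b 0 := by rw [hpe]
      exact sub_eq_zero_of_eq this
    · have hne : ((b, (0:Fin 2)) : V × Fin 2) ≠ (a, 0) := by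
        simp [Prod.ext_iff]
        intro h; exact absurd h (Ne.symm hab)
      simp [hne]
  · intro a b x hab hxa hxb
    set f : MvPolynomial (V × Fin 2) ℚ :=
      (X (b, 0) - X (a, 0)) * (X (x, 1) - X (a, 1))
        - (X (b, 1) - X (a, 1)) * (X (x, 0) - X (a, 0)) with hf
    have h := generic_ne p hp f
      (fun vi => if vi = (b, (0 : Fin 2)) then 1 else if vi = (x, (1 : Fin 2)) then 1 else 0) ?_
    · intro hzero
      apply h
      rw [hf]
      simp only [map_sub, _root_.map_mul, aeval_X]
      linear_combination hzero
    · have h1 : ((a, (0:Fin 2)) : V × Fin 2) ≠ (b, 0) := by simp [Prod.ext_iff]; intro h; exact absurd h hab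
      have h2 : ((a, (0:Fin 2)) : V × Fin 2) ≠ (x, 1) := by simp [Prod.ext_iff]
      have h3 : ((a, (1:Fin 2)) : V × Fin 2) ≠ (b, 0) := by simp [Prod.ext_iff]
      have h4 : ((a, (1:Fin 2)) : V × Fin 2) ≠ (x, 1) := by simp [Prod.ext_iff]; intro h; exact absurd h (Ne.symm hxa)
      have h5 : ((b, (1:Fin 2)) : V × Fin 2) ≠ (b, 0) := by simp
      have h6 : ((b, (1:Fin 2)) : V × Fin 2) ≠ (x, 1) := by simp [Prod.ext_iff]; intro h; exact absurd h (Ne.symm hxb)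
      have h7 : ((x, (0:Fin 2)) : V × Fin 2) ≠ (b, 0) := by simp [Prod.ext_iff]; intro h; exact absurd h hxb
      have h8 : ((x, (0:Fin 2)) : V × Fin 2) ≠ (x, 1) := by simp
      rw [hf]
      simp [h1, h2, h3, h4, h5, h6, h7, h8]

lemma coord_ne {x y : E2} (h : x ≠ y) : x 0 ≠ y 0 ∨ x 1 ≠ y 1 := by
  by_contra hc
  push_neg at hc
  apply h
  ext i
  fin_cases i
  exacts [hc.1, hc.2]

end H2Aux

namespace H2Aux

variable {α β : Type}

def m3 (u v z : α) : Fin 3 → α := fun k => if k = 0 then u else if k = 1 then v else z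

abbrev Iprime (G : SimpleGraph α) (u v : α) : Type :=
  {e : ↥G.edgeSet // ¬ (e.val = s(u, v))} ⊕ Fin 3

def endsPrime {G : SimpleGraph α} (φ : α ↪ β) (w : β) (u v z : α)
    (endsG : ↥G.edgeSet → α × α) : Iprime G u v → β × β :=
  Sum.elim (fun e => (φ (endsG e.1).1, φ (endsG e.1).2)) (fun k => (w, φ (m3 u v z k)))

end H2Aux

open H2Aux in
/-- Let `G` be a Laman graph, `G → G'` a Henneberg 2 move, and
`(G,p)`, `(G',p')` generic frameworks in the plane.  If `(G,p)` is isostatic then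
so is `(G',p')`. -/
theorem henneberg2_preserves_isostatic {α β : Type} [Fintype α] [Fintype β]
    (G : SimpleGraph α) (G' : SimpleGraph β) (φ : α ↪ β) (w : β)
    (hG : Laman G) (hmove : Henneberg2Rel G G' φ w)
    (p : α → E2) (p' : β → E2) (hp : Generic2 p) (hp' : Generic2 p')
    (hiso : Isostatic2 G p) : Isostatic2 G' p' := by

  classical
  obtain ⟨hcover, hw, u, v, z, huv, hzu, hzv, hadj⟩ := hmove
  have huvne : u ≠ v := huv.ne
  have hgp : GenPos p := generic_genPos p hp
  have hgp' : GenPos p' := generic_genPos p' hp'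
  -- edge indexing for G
  haveI : Fintype ↥G.edgeSet := Set.Finite.fintype (Set.toFinite _)
  have hex : ∀ e : ↥G.edgeSet, ∃ ab : α × α, G.Adj ab.1 ab.2 ∧ s(ab.1, ab.2) = e.val := by
    rintro ⟨e, he⟩
    induction e using Sym2.ind with
    | _ a b => exact ⟨(a, b), G.mem_edgeSet.mp he, rfl⟩
  choose endsG hadjG hmkG using hex
  have hEG : IsEnds G endsG := by
    refine ⟨hadjG, ?_, ?_⟩
    · intro e f hef
      apply Subtype.ext
      rw [← hmkG e, ← hmkG f]
      exact hef
    · intro a b hab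
      refine ⟨⟨s(a, b), G.mem_edgeSet.mpr hab⟩, ?_⟩
      have h := hmkG ⟨s(a, b), G.mem_edgeSet.mpr hab⟩
      rcases Sym2.eq_iff.mp h with ⟨h1, h2⟩ | ⟨h1, h2⟩
      · left; exact Prod.ext h1 h2
      · right; exact Prod.ext h1 h2
  -- edge count of G
  have hcardG : Fintype.card ↥G.edgeSet + 3 = 2 * Fintype.card α := by
    have h3 := hG.2.2
    unfold gFreedom at h3
    rw [Set.ncard_univ, Nat.card_eq_fintype_card] at h3
    have hEcard : G.edgeSet.ncard = Fintype.card ↥G.edgeSet := by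
      rw [← Nat.card_coe_set_eq, Nat.card_eq_fintype_card]
    rw [hEcard] at h3
    omega
  -- no self-stress for (G, p)
  have hkerG : LinearMap.ker (RM endsG p).mulVecLin = ⊥ :=
    ker_bot_of_infRigid hEG hgp huvne hcardG hiso.1
  -- vertex count of β
  have hcardβ : Fintype.card β = Fintype.card α + 1 := by
    have hbij : Function.Bijective (fun o : Option α => o.elim w φ) := by
      constructor
      · rintro (_ | a) (_ | b) h
        · rfl
        · exact absurd ⟨b, h.symm⟩ hw
        · exact absurd ⟨a, h⟩ hw
        · rw [φ.injective h]
      · intro y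
        rcases hcover y with ⟨a, rfl⟩ | rfl
        exacts [⟨some a, rfl⟩, ⟨none, rfl⟩]
    calc Fintype.card β = Fintype.card (Option α) := (Fintype.card_of_bijective hbij).symm
      _ = Fintype.card α + 1 := Fintype.card_option
  -- the distinguished edge of G
  have huvmem : s(u, v) ∈ G.edgeSet := G.mem_edgeSet.mpr huv
  set e0idx : ↥G.edgeSet := ⟨s(u, v), huvmem⟩ with he0idx
  set ends' : Iprime G u v → β × β := endsPrime φ w u v z endsG with hends'
  have hm3 : m3 u v z 0 = u ∧ m3 u v z 1 = v ∧ m3 u v z 2 = z := by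
    refine ⟨rfl, ?_, rfl⟩
    simp [m3]
  have hwnotphi : ∀ a : α, ¬ (φ a = w) := fun a h => hw ⟨a, h⟩
  have hphinotw : ∀ a : α, ¬ (w = φ a) := fun a h => hw ⟨a, h.symm⟩
  have hm3inj : ∀ k l : Fin 3, m3 u v z k = m3 u v z l → k = l := by
    intro k l hkl
    fin_cases k <;> fin_cases l <;>
      first
        | rfl
        | (exfalso; revert hkl;
           simp [m3, huvne, hzu, hzv, Ne.symm huvne, Ne.symm hzu, Ne.symm hzv])
  have hE' : IsEnds G' ends' := by
    refine ⟨?_, ?_, ?_⟩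
    · intro e
      cases e with
      | inl e =>
          show G'.Adj (φ (endsG e.1).1) (φ (endsG e.1).2)
          rw [hadj]
          refine Or.inl ⟨(endsG e.1).1, (endsG e.1).2, hadjG e.1, ?_, rfl, rfl⟩
          rw [hmkG e.1]
          exact e.2
      | inr k =>
          show G'.Adj w (φ (m3 u v z k))
          rw [hadj]
          refine Or.inr (Or.inl ⟨rfl, ?_⟩)
          fin_cases k <;> simp [m3]
    · intro e f hef
      cases e with
      | inl e =>
        cases f with
        | inl f =>
            simp only [hends', endsPrime, Sum.elim_inl] at hef
            congr 1
            apply Subtype.ext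
            apply Subtype.ext
            rw [← hmkG e.1, ← hmkG f.1]
            rcases Sym2.eq_iff.mp hef with ⟨h1, h2⟩ | ⟨h1, h2⟩
            · rw [φ.injective h1, φ.injective h2]
            · rw [φ.injective h1, φ.injective h2]
              exact Sym2.eq_swap
        | inr k =>
            exfalso
            simp only [hends', endsPrime, Sum.elim_inl, Sum.elim_inr] at hef
            rcases Sym2.eq_iff.mp hef with ⟨h1, _⟩ | ⟨_, h2⟩
            · exact hwnotphi _ h1
            · exact hwnotphi _ h2
      | inr k =>
        cases f with
        | inl f =>
            exfalso
            simp only [hends', endsPrime, Sum.elim_inl, Sum.elim_inr] at hef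
            rcases Sym2.eq_iff.mp hef with ⟨h1, _⟩ | ⟨h1, _⟩
            · exact hphinotw _ h1
            · exact hphinotw _ h1
        | inr l =>
            simp only [hends', endsPrime, Sum.elim_inr] at hef
            rcases Sym2.eq_iff.mp hef with ⟨_, h2⟩ | ⟨h1, _⟩
            · rw [hm3inj _ _ (φ.injective h2)]
            · exact absurd h1 (hphinotw _)
    · intro a b hab
      rw [hadj] at hab
      rcases hab with ⟨c, d, hcd, hne, hac, hbd⟩ | ⟨ha, hy⟩ | ⟨hb, hx⟩
      · subst hac; subst hbd
        have hmem : s(c, d) ∈ G.edgeSet := G.mem_edgeSet.mpr hcd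
        have hne' : ¬ ((⟨s(c, d), hmem⟩ : ↥G.edgeSet).val = s(u, v)) := hne
        refine ⟨Sum.inl ⟨⟨s(c, d), hmem⟩, hne'⟩, ?_⟩
        have h := hmkG ⟨s(c, d), hmem⟩
        rcases Sym2.eq_iff.mp h with ⟨h1, h2⟩ | ⟨h1, h2⟩
        · left
          show (φ (endsG _).1, φ (endsG _).2) = (φ c, φ d)
          rw [h1, h2]
        · right
          show (φ (endsG _).1, φ (endsG _).2) = (φ d, φ c)
          rw [h1, h2]
      · rcases hy with hb | hb | hb
        · refine ⟨Sum.inr 0, Or.inl ?_⟩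
          show (w, φ (m3 u v z 0)) = (a, b)
          rw [ha, hb, hm3.1]
        · refine ⟨Sum.inr 1, Or.inl ?_⟩
          show (w, φ (m3 u v z 1)) = (a, b)
          rw [ha, hb, hm3.2.1]
        · refine ⟨Sum.inr 2, Or.inl ?_⟩
          show (w, φ (m3 u v z 2)) = (a, b)
          rw [ha, hb, hm3.2.2]
      · rcases hx with ha | ha | ha
        · refine ⟨Sum.inr 0, Or.inr ?_⟩
          show (w, φ (m3 u v z 0)) = (b, a)
          rw [hb, ha, hm3.1]
        · refine ⟨Sum.inr 1, Or.inr ?_⟩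
          show (w, φ (m3 u v z 1)) = (b, a)
          rw [hb, ha, hm3.2.1]
        · refine ⟨Sum.inr 2, Or.inr ?_⟩
          show (w, φ (m3 u v z 2)) = (b, a)
          rw [hb, ha, hm3.2.2]
  -- cardinality of the G' edge index
  have hcard1 : Fintype.card {e : ↥G.edgeSet // (e.val = s(u, v))} = 1 := by
    rw [Fintype.card_eq_one_iff]
    refine ⟨⟨e0idx, rfl⟩, ?_⟩
    rintro ⟨⟨e, he⟩, hh⟩
    apply Subtype.ext
    apply Subtype.ext
    exact hh
  have hpos : 1 ≤ Fintype.card ↥G.edgeSet := Fintype.card_pos_iff.mpr ⟨e0idx⟩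
  have hcard' : Fintype.card (Iprime G u v) + 3 = 2 * Fintype.card β := by
    have h1 : Fintype.card (Iprime G u v)
        = Fintype.card {e : ↥G.edgeSet // ¬ (e.val = s(u, v))} + 3 := by
      rw [Fintype.card_sum, Fintype.card_fin]
    have h2 : Fintype.card {e : ↥G.edgeSet // ¬ (e.val = s(u, v))}
        = Fintype.card ↥G.edgeSet - 1 := by
      rw [Fintype.card_subtype_compl, hcard1]
    omega
  have hwphiu : w ≠ φ u := fun h => hw ⟨u, h.symm⟩
  -- the special configuration q
  set q : β → E2 := fun y =>
    if h : ∃ a, φ a = y then p h.choose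
    else (WithLp.toLp 2 (fun i => (p u i + p v i) / 2) : EuclideanSpace ℝ (Fin 2)) with hq
  have hqφ : ∀ a : α, q (φ a) = p a := by
    intro a
    have hex2 : ∃ c, φ c = φ a := ⟨a, rfl⟩
    rw [hq]
    simp only
    rw [dif_pos hex2]
    rw [φ.injective hex2.choose_spec]
  have hqwi : ∀ i : Fin 2, q w i = (p u i + p v i) / 2 := by
    intro i
    rw [hq]
    simp only
    rw [dif_neg (fun h : ∃ a, φ a = w => hw ⟨h.choose, h.choose_spec⟩)]
  -- the stress argument at q
  have hkerq : LinearMap.ker (RM ends' q).mulVecLin = ⊥ := by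
    rw [eq_bot_iff]
    intro ω hω
    rw [LinearMap.mem_ker] at hω
    have eqAt : ∀ (x : β) (i : Fin 2),
        ∑ e : Iprime G u v, RM ends' q (x, i) e * ω e = 0 := by
      intro x i
      have h := congrFun hω (x, i)
      rw [stress_apply] at h
      simpa using h
    have entry_w_inl : ∀ (e : {e : ↥G.edgeSet // ¬ (e.val = s(u, v))}) (i : Fin 2),
        RM ends' q (w, i) (Sum.inl e) = 0 := by
      intro e i
      simp [RM, hends', endsPrime, hphinotw]
    have entry_w_inr : ∀ (k : Fin 3) (i : Fin 2),
        RM ends' q (w, i) (Sum.inr k) = q w i - q (φ (m3 u v z k)) i := by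
      intro k i
      simp [RM, hends', endsPrime]
    have eqW : ∀ i : Fin 2,
        (q w i - p u i) * ω (Sum.inr 0) + (q w i - p v i) * ω (Sum.inr 1)
          + (q w i - p z i) * ω (Sum.inr 2) = 0 := by
      intro i
      have h := eqAt w i
      rw [Fintype.sum_sum_type] at h
      rw [Finset.sum_eq_zero (fun e _ => by rw [entry_w_inl e i, zero_mul])] at h
      rw [zero_add, Fin.sum_univ_three, entry_w_inr, entry_w_inr, entry_w_inr,
        hm3.1, hm3.2.1, hm3.2.2, hqφ u, hqφ v, hqφ z] at h
      exact h
    have hD := hgp.2 u v z huvne hzu hzv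
    have hs2 : ω (Sum.inr 2) = 0 := by
      have h0 := eqW 0
      have h1 := eqW 1
      rw [hqwi 0] at h0
      rw [hqwi 1] at h1
      have hkey : ω (Sum.inr 2) * ((p v 0 - p u 0) * (p z 1 - p u 1)
          - (p v 1 - p u 1) * (p z 0 - p u 0)) = 0 := by
        linear_combination (p v 1 - p u 1) * h0 - (p v 0 - p u 0) * h1
      rcases mul_eq_zero.mp hkey with h | h
      · exact h
      · exact absurd h hD
    have hs01 : ω (Sum.inr 0) = ω (Sum.inr 1) := by
      have h0 := eqW 0
      have h1 := eqW 1
      rw [hqwi 0] at h0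
      rw [hqwi 1] at h1
      rcases coord_ne (hgp.1 u v huvne) with hne | hne
      · have hkey : (ω (Sum.inr 0) - ω (Sum.inr 1)) * (p v 0 - p u 0) = 0 := by
          linear_combination 2 * h0 - (p u 0 + p v 0 - 2 * p z 0) * hs2
        rcases mul_eq_zero.mp hkey with h | h
        · linarith
        · exact absurd (by linarith : p u 0 = p v 0) hne
      · have hkey : (ω (Sum.inr 0) - ω (Sum.inr 1)) * (p v 1 - p u 1) = 0 := by
          linear_combination 2 * h1 - (p u 1 + p v 1 - 2 * p z 1) * hs2
        rcases mul_eq_zero.mp hkey with h | h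
        · linarith
        · exact absurd (by linarith : p u 1 = p v 1) hne
    set σ : ↥G.edgeSet → ℝ :=
      fun e => if h : e.val = s(u, v) then ω (Sum.inr 0) / 2 else ω (Sum.inl ⟨e, h⟩) with hσdef
    have hrep : endsG e0idx = (u, v) ∨ endsG e0idx = (v, u) := by
      have h : s((endsG e0idx).1, (endsG e0idx).2) = s(u, v) := hmkG e0idx
      rcases Sym2.eq_iff.mp h with ⟨h1, h2⟩ | ⟨h1, h2⟩
      · left; exact Prod.ext h1 h2
      · right; exact Prod.ext h1 h2
    have hrm0 : ∀ (a : α) (i : Fin 2), RM endsG p (a, i) e0idx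
        = (if a = u then p u i - p v i else if a = v then p v i - p u i else 0) := by
      intro a i
      rcases hrep with h | h
      · simp [RM, h]
      · by_cases hau : a = u <;> by_cases hav : a = v
        · exact absurd (hau.symm.trans hav) huvne
        · simp [RM, h, hau, hav, huvne, huvne.symm]
        · simp [RM, h, hau, hav, huvne, huvne.symm]
        · simp [RM, h, hau, hav, huvne, huvne.symm]
    have entry_phi_inl : ∀ (a : α) (i : Fin 2) (e : {e : ↥G.edgeSet // ¬ (e.val = s(u, v))}),
        RM ends' q (φ a, i) (Sum.inl e) = RM endsG p (a, i) e.1 := by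
      intro a i e
      simp only [RM, hends', endsPrime, Sum.elim_inl]
      by_cases h1 : a = (endsG e.1).1 <;> by_cases h2 : a = (endsG e.1).2 <;>
        simp [h1, h2, φ.injective.eq_iff, hqφ]
    have hiff : ∀ x : ↥G.edgeSet, x ∈ Finset.univ.erase e0idx ↔ ¬ (x.val = s(u, v)) := by
      intro x
      rw [Finset.mem_erase]
      simp [Subtype.ext_iff, he0idx]
    have hstress : (RM endsG p).mulVecLin σ = 0 := by
      funext xi
      rcases xi with ⟨a, i⟩
      rw [stress_apply, Pi.zero_apply]
      have h := eqAt (φ a) i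
      rw [Fintype.sum_sum_type] at h
      rw [Finset.sum_congr rfl (fun e _ => by rw [entry_phi_inl a i e])] at h
      rw [Fin.sum_univ_three] at h
      have hEk : ∀ k : Fin 3, RM ends' q (φ a, i) (Sum.inr k)
          = if a = m3 u v z k then p (m3 u v z k) i - q w i else 0 := by
        intro k
        simp [RM, hends', endsPrime, hwnotphi a, φ.injective.eq_iff, hqφ]
      rw [hEk 0, hEk 1, hEk 2, hm3.1, hm3.2.1, hm3.2.2] at h
      have hsplit : ∑ e : ↥G.edgeSet, RM endsG p (a, i) e * σ e
          = (∑ e : {e : ↥G.edgeSet // ¬ (e.val = s(u, v))},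
              RM endsG p (a, i) e.1 * ω (Sum.inl e))
            + RM endsG p (a, i) e0idx * (ω (Sum.inr 0) / 2) := by
        rw [← Finset.sum_erase_add Finset.univ _ (Finset.mem_univ e0idx)]
        congr 1
        · rw [Finset.sum_subtype (Finset.univ.erase e0idx) hiff
            (fun e => RM endsG p (a, i) e * σ e)]
          refine Finset.sum_congr rfl fun e _ => ?_
          congr 1
          simp only [hσdef]
          rw [dif_neg e.2]
        · congr 1
          simp [hσdef, he0idx]
      rw [hsplit]
      rw [hrm0 a i]
      by_cases hau : a = u
      · have hav : ¬ a = v := fun hh => huvne (hau.symm.trans hh)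
        have haz : ¬ a = z := fun hh => hzu (hh.symm.trans hau)
        rw [if_pos hau]
        rw [if_pos hau, if_neg hav, if_neg haz] at h
        linear_combination h + ω (Sum.inr 0) * hqwi i
      · by_cases hav : a = v
        · have haz : ¬ a = z := fun hh => hzv (hh.symm.trans hav)
          rw [if_neg hau, if_pos hav]
          rw [if_neg hau, if_pos hav, if_neg haz] at h
          linear_combination h + ω (Sum.inr 1) * hqwi i + ((p v i - p u i) / 2) * hs01
        · by_cases haz : a = z
          · rw [if_neg hau, if_neg hav]
            rw [if_neg hau, if_neg hav, if_pos haz] at h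
            linear_combination h + (q w i - p z i) * hs2
          · rw [if_neg hau, if_neg hav]
            rw [if_neg hau, if_neg hav, if_neg haz] at h
            linear_combination h
    have hσ0 : σ = 0 := by
      have hmem : σ ∈ LinearMap.ker (RM endsG p).mulVecLin := by
        rw [LinearMap.mem_ker]
        exact hstress
      rw [hkerG, Submodule.mem_bot] at hmem
      exact hmem
    have hs0 : ω (Sum.inr 0) = 0 := by
      have h := congrFun hσ0 e0idx
      simp [hσdef, he0idx, Pi.zero_apply] at h
      linarith
    rw [Submodule.mem_bot]
    funext e
    show ω e = 0
    cases e with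
    | inl e =>
        have h := congrFun hσ0 e.1
        simp only [hσdef, Pi.zero_apply] at h
        rw [dif_neg e.2] at h
        exact h
    | inr k =>
        fin_cases k
        · exact hs0
        · show ω (Sum.inr 1) = 0
          rw [← hs01]
          exact hs0
        · show ω (Sum.inr 2) = 0
          exact hs2
  -- transfer to p'
  have hkerp' : LinearMap.ker (RM ends' p').mulVecLin = ⊥ :=
    ker_bot_transfer ends' q p' hp' hkerq
  constructor
  · exact infRigid_of_ker_bot hE' hgp' hwphiu hcard' hkerp'
  · -- minimality
    intro e0' he0'
    intro hrigH
    obtain ⟨a0, b0, hab0, he0eq⟩ : ∃ a b : β, G'.Adj a b ∧ s(a, b) = e0' := by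
      induction e0' using Sym2.ind with
      | _ a b => exact ⟨a, b, G'.mem_edgeSet.mp he0', rfl⟩
    obtain ⟨e1, he1⟩ := hE'.2.2 a0 b0 hab0
    have he1s : s((ends' e1).1, (ends' e1).2) = e0' := by
      rcases he1 with h | h <;> rw [h]
      · exact he0eq
      · rw [Sym2.eq_swap]
        exact he0eq
    have hEH : IsEnds (G'.deleteEdges {e0'})
        (fun e : {e : Iprime G u v // ¬ (s((ends' e).1, (ends' e).2) = e0')} => ends' e.1) := by
      refine ⟨?_, ?_, ?_⟩
      · intro e
        rw [SimpleGraph.deleteEdges_adj]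
        exact ⟨hE'.1 e.1, by simpa using e.2⟩
      · intro e f hef
        apply Subtype.ext
        exact hE'.2.1 hef
      · intro a b hab
        rw [SimpleGraph.deleteEdges_adj] at hab
        obtain ⟨e, he⟩ := hE'.2.2 a b hab.1
        have hne : ¬ (s((ends' e).1, (ends' e).2) = e0') := by
          rcases he with h | h <;> rw [h]
          · simpa using hab.2
          · rw [Sym2.eq_swap]
            simpa using hab.2
        exact ⟨⟨e, hne⟩, he⟩
    have hcard1' : Fintype.card {e : Iprime G u v // (s((ends' e).1, (ends' e).2) = e0')} = 1 := by
      rw [Fintype.card_eq_one_iff]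
      refine ⟨⟨e1, he1s⟩, ?_⟩
      rintro ⟨f, hf⟩
      exact Subtype.ext (hE'.2.1 (hf.trans he1s.symm))
    have hcardJ : Fintype.card {e : Iprime G u v // ¬ (s((ends' e).1, (ends' e).2) = e0')}
        = Fintype.card (Iprime G u v) - 1 := by
      rw [Fintype.card_subtype_compl, hcard1']
    have hposJ : 1 ≤ Fintype.card (Iprime G u v) := Fintype.card_pos_iff.mpr ⟨e1⟩
    have hcardle : Fintype.card {e : Iprime G u v // ¬ (s((ends' e).1, (ends' e).2) = e0')} + 4
        ≤ 2 * Fintype.card β := by omega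
    exact not_infRigid_of_card_lt hEH hgp' hwphiu hcardle hrigH
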